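/- Let f₁, f₂ : ℝ^{d₁} × ℝ^{d₂} → ℝ be twice continuously differentiable, and let x = (x₁, x₂). Suppose for each player i the partial derivative of f_i in its own variable vanishes at x (D₁f₁(x₁, x₂) = 0 and D₂f₂(x₁, x₂) = 0) and the individual Hessian in its own variable is positive definite at x (D₁²f₁(x) ≻ 0 and D₂²f₂(x) ≻ 0), i.e. x is a differential Nash equilibrium. Then x is a strict local Nash equilibrium: there exist neighborhoods W₁ of x₁ and W₂ of x₂ such that f₁(x₁, x₂) < f₁(x₁′, x₂) for all x₁′ ∈ W₁ with x₁′ ≠ x₁, and f₂(x₁, x₂) < f₂(x₁, x₂′) for all x₂′ ∈ W₂ with x₂′ ≠ x₂. -/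

import Mathlib

set_option maxHeartbeats 1000000

open Set

lemma second_order_strict_min {E : Type*} [NormedAddCommGroup E] [NormedSpace ℝ E]
    [FiniteDimensional ℝ E] (g : E → ℝ) (hg : ContDiff ℝ 2 g) (a : E)
    (h0 : fderiv ℝ g a = 0)
    (hH : ∀ v : E, v ≠ 0 → 0 < fderiv ℝ (fun y => fderiv ℝ g y) a v v) :
    ∃ U ∈ nhds a, ∀ x ∈ U, x ≠ a → g a < g x := by
  by_cases hsub : Subsingleton E
  · exact ⟨Set.univ, Filter.univ_mem, fun x _ hx => absurd (Subsingleton.elim x a) hx⟩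
  rw [not_subsingleton_iff_nontrivial] at hsub
  have hF : ContDiff ℝ 1 (fun y => fderiv ℝ g y) := hg.fderiv_right le_rfl
  set H : E → (E →L[ℝ] (E →L[ℝ] ℝ)) := fun y => fderiv ℝ (fun y => fderiv ℝ g y) y with hHdef
  have hHcont : Continuous H := hF.continuous_fderiv one_ne_zero
  -- min of quadratic form on the unit sphere
  have hsph : (Metric.sphere (0:E) 1).Nonempty := by
    rw [NormedSpace.sphere_nonempty]; norm_num
  have hcomp : IsCompact (Metric.sphere (0:E) 1) := isCompact_sphere 0 1
  have hQcont : Continuous fun v : E => H a v v :=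
    ((H a).continuous.clm_apply continuous_id)
  obtain ⟨v₀, hv₀mem, hv₀min⟩ := hcomp.exists_isMinOn hsph hQcont.continuousOn
  have hv₀norm : ‖v₀‖ = 1 := by simpa using hv₀mem
  have hv₀ne : v₀ ≠ 0 := by intro h; rw [h] at hv₀norm; simp at hv₀norm
  set c : ℝ := H a v₀ v₀ with hc
  have hcpos : 0 < c := hH v₀ hv₀ne
  -- quadratic lower bound at a
  have hlow : ∀ v : E, c * ‖v‖^2 ≤ H a v v := by
    intro v
    rcases eq_or_ne v 0 with rfl | hv
    · simp
    · have hnv : (0:ℝ) < ‖v‖ := norm_pos_iff.mpr hv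
      set u : E := ‖v‖⁻¹ • v with hu
      have hunorm : u ∈ Metric.sphere (0:E) 1 := by
        simp [hu, norm_smul, abs_of_pos (inv_pos.mpr hnv), inv_mul_cancel₀ hnv.ne']
      have h1 : c ≤ H a u u := hv₀min hunorm
      have h2 : H a u u = ‖v‖⁻¹ * (‖v‖⁻¹ * H a v v) := by
        simp [hu, map_smul]
      rw [h2] at h1
      have := mul_le_mul_of_nonneg_left h1 (le_of_lt (mul_pos hnv hnv))
      calc c * ‖v‖^2 = ‖v‖ * ‖v‖ * c := by ring
      _ ≤ ‖v‖ * ‖v‖ * (‖v‖⁻¹ * (‖v‖⁻¹ * H a v v)) := this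
      _ = H a v v := by field_simp
  -- choose δ from continuity of H
  obtain ⟨δ, hδpos, hδ⟩ : ∃ δ > 0, ∀ y, dist y a < δ → ‖H y - H a‖ < c/2 := by
    have hc' : @Continuous E (E →L[ℝ] E →L[ℝ] ℝ) _
        (@UniformSpace.toTopologicalSpace _ PseudoMetricSpace.toUniformSpace) H := hHcont
    obtain ⟨δ, hδ, hd⟩ := Metric.continuous_iff.mp hc' a (c/2) (by linarith)
    exact ⟨δ, hδ, fun y hy => by have := hd y hy; exact lt_of_eq_of_lt (dist_eq_norm (H y) (H a)).symm (by exact this)⟩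
  -- lower bound on the ball
  have hball : ∀ y ∈ Metric.ball a δ, ∀ v : E, v ≠ 0 → 0 < H y v v := by
    intro y hy v hv
    have hnv : (0:ℝ) < ‖v‖ := norm_pos_iff.mpr hv
    have hd : ‖H y - H a‖ ≤ c/2 := le_of_lt (hδ y (Metric.mem_ball.mp hy))
    have hb : ‖(H y - H a) v v‖ ≤ ‖H y - H a‖ * ‖v‖ * ‖v‖ :=
      le_trans (((H y - H a) v).le_opNorm v)
        (mul_le_mul_of_nonneg_right ((H y - H a).le_opNorm v) (norm_nonneg v))
    have hprod : 0 < ‖v‖ * ‖v‖ := mul_pos hnv hnv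
    have h3 : ‖H y - H a‖ * ‖v‖ * ‖v‖ ≤ c/2 * (‖v‖ * ‖v‖) := by
      nlinarith [norm_nonneg (H y - H a)]
    have h1 : -(c/2 * (‖v‖ * ‖v‖)) ≤ (H y - H a) v v := by
      have habs := (abs_le.mp (by rwa [Real.norm_eq_abs] at hb)).1
      linarith
    have heq : H y v v = H a v v + (H y - H a) v v := by
      simp [ContinuousLinearMap.sub_apply]
    have h2 : c * ‖v‖^2 ≤ H a v v := hlow v
    have hsq : ‖v‖^2 = ‖v‖ * ‖v‖ := sq ‖v‖
    rw [heq]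
    nlinarith
  refine ⟨Metric.ball a δ, Metric.ball_mem_nhds a hδpos, fun x hx hxa => ?_⟩
  set h : E := x - a with hh
  have hhne : h ≠ 0 := sub_ne_zero.mpr hxa
  have hhlt : ‖h‖ < δ := by simpa [hh, dist_eq_norm] using Metric.mem_ball.mp hx
  set L : ℝ → E := fun t => a + t • h with hL
  have hLmem : ∀ t ∈ Icc (0:ℝ) 1, L t ∈ Metric.ball a δ := by
    intro t ht
    simp only [hL, Metric.mem_ball, dist_eq_norm, add_sub_cancel_left, norm_smul]
    calc |t| * ‖h‖ ≤ 1 * ‖h‖ := by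
          apply mul_le_mul_of_nonneg_right _ (norm_nonneg h)
          rw [abs_le]; exact ⟨by linarith [ht.1], ht.2⟩
    _ = ‖h‖ := one_mul _
    _ < δ := hhlt
  have hLd : ∀ t : ℝ, HasDerivAt L h t := by
    intro t
    simpa [hL] using ((hasDerivAt_id t).smul_const h).const_add a
  have hgd : Differentiable ℝ g := hg.differentiable (by norm_num)
  have hFd : Differentiable ℝ (fun y => fderiv ℝ g y) := hF.differentiable one_ne_zero
  set φ : ℝ → ℝ := fun t => g (L t) with hφ
  set ψ : ℝ → ℝ := fun t => fderiv ℝ g (L t) h with hψ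
  have hφd : ∀ t : ℝ, HasDerivAt φ (ψ t) t := fun t =>
    ((hgd (L t)).hasFDerivAt).comp_hasDerivAt t (hLd t)
  have hψd : ∀ t : ℝ, HasDerivAt ψ (H (L t) h h) t := by
    intro t
    have e : (E →L[ℝ] ℝ) →L[ℝ] ℝ := ContinuousLinearMap.apply ℝ ℝ h
    have h1 : HasFDerivAt (fun y => fderiv ℝ g y h)
        ((ContinuousLinearMap.apply ℝ ℝ h).comp (H (L t))) (L t) :=
      (ContinuousLinearMap.apply ℝ ℝ h).hasFDerivAt.comp (L t) (hFd (L t)).hasFDerivAt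
    exact h1.comp_hasDerivAt t (hLd t)
  have hψ0 : ψ 0 = 0 := by simp [hψ, hL, h0]
  -- ψ strictly increasing on [0,1]
  have hψmono : StrictMonoOn ψ (Icc (0:ℝ) 1) := by
    apply strictMonoOn_of_deriv_pos (convex_Icc 0 1)
      (fun t _ => ((hψd t).differentiableAt).continuousAt.continuousWithinAt)
    intro t ht
    rw [interior_Icc] at ht
    rw [(hψd t).deriv]
    exact hball (L t) (hLmem t ⟨le_of_lt ht.1, le_of_lt ht.2⟩) h hhne
  have hψpos : ∀ t ∈ Ioo (0:ℝ) 1, 0 < ψ t := by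
    intro t ht
    have := hψmono (left_mem_Icc.mpr zero_le_one) ⟨le_of_lt ht.1, le_of_lt ht.2⟩ ht.1
    rwa [hψ0] at this
  have hφmono : StrictMonoOn φ (Icc (0:ℝ) 1) := by
    apply strictMonoOn_of_deriv_pos (convex_Icc 0 1)
      (fun t _ => ((hφd t).differentiableAt).continuousAt.continuousWithinAt)
    intro t ht
    rw [interior_Icc] at ht
    rw [(hφd t).deriv]
    exact hψpos t ht
  have := hφmono (left_mem_Icc.mpr zero_le_one) (right_mem_Icc.mpr zero_le_one)
    zero_lt_one
  simpa [hφ, hL, hh] using this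

theorem differentialNash_implies_strict_local_nash (d₁ d₂ : ℕ)
    (f₁ f₂ : EuclideanSpace ℝ (Fin d₁) × EuclideanSpace ℝ (Fin d₂) → ℝ)
    (hf₁ : ContDiff ℝ 2 f₁) (hf₂ : ContDiff ℝ 2 f₂)
    (x₁ : EuclideanSpace ℝ (Fin d₁)) (x₂ : EuclideanSpace ℝ (Fin d₂))
    (hD₁ : fderiv ℝ (fun y => f₁ (y, x₂)) x₁ = 0)
    (hD₂ : fderiv ℝ (fun y => f₂ (x₁, y)) x₂ = 0)
    (hH₁ : ∀ v : EuclideanSpace ℝ (Fin d₁), v ≠ 0 →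
      0 < fderiv ℝ (fun y => fderiv ℝ (fun z => f₁ (z, x₂)) y) x₁ v v)
    (hH₂ : ∀ v : EuclideanSpace ℝ (Fin d₂), v ≠ 0 →
      0 < fderiv ℝ (fun y => fderiv ℝ (fun z => f₂ (x₁, z)) y) x₂ v v) :
    (∃ W₁ ∈ nhds x₁, ∀ x₁' ∈ W₁, x₁' ≠ x₁ → f₁ (x₁, x₂) < f₁ (x₁', x₂)) ∧
    (∃ W₂ ∈ nhds x₂, ∀ x₂' ∈ W₂, x₂' ≠ x₂ → f₂ (x₁, x₂) < f₂ (x₁, x₂')) := by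
  have hg₁ : ContDiff ℝ 2 (fun z => f₁ (z, x₂)) :=
    hf₁.comp (contDiff_id.prodMk contDiff_const)
  have hg₂ : ContDiff ℝ 2 (fun z => f₂ (x₁, z)) :=
    hf₂.comp (contDiff_const.prodMk contDiff_id)
  exact ⟨second_order_strict_min _ hg₁ x₁ hD₁ hH₁,
    second_order_strict_min _ hg₂ x₂ hD₂ hH₂⟩
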